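/- Let X ~ N(γ, σ_X²), Y ~ N(βγ, σ_Y²), and Z ~ N(γ, σ*²) be mutually independent Gaussians, λ ≥ 0, I the indicator of {|Z| > λσ*}, and q = P(|Z| > λσ*). Then Var[(XY − βX²)/σ_Y² · I] = [(w + v) + β² v (w + 3v)] q − β² v² q², where w = γ²/σ_Y² and v = σ_X²/σ_Y². -/

import Mathlib

open MeasureTheory ProbabilityTheory
open Real Set
open scoped ENNReal NNReal

lemma my_integrable_pow_mul_exp {b : ℝ} (hb : 0 < b) (k : ℕ) :
    Integrable (fun x : ℝ => x ^ k * rexp (-b * x ^ 2)) := by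
  have h := integrable_rpow_mul_exp_neg_mul_sq hb (s := (k : ℝ))
    (by exact_mod_cast neg_one_lt_zero.trans_le (Nat.cast_nonneg k) : (-1:ℝ) < (k:ℝ))
  simpa [Real.rpow_natCast] using h

lemma my_integral_gaussianReal {μ : ℝ} {v : ℝ≥0} (hv : v ≠ 0) (g : ℝ → ℝ) :
    ∫ x, g x ∂(gaussianReal μ v) = ∫ x, gaussianPDFReal μ v x * g x := by
  rw [gaussianReal_of_var_ne_zero _ hv]
  have h1 : (gaussianPDF μ v) = fun x => ((Real.toNNReal (gaussianPDFReal μ v x) : ℝ≥0) : ℝ≥0∞) := rfl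
  rw [h1, integral_withDensity_eq_integral_smul (measurable_gaussianPDFReal μ v).real_toNNReal g]
  congr 1
  ext x
  simp [NNReal.smul_def, Real.coe_toNNReal _ (gaussianPDFReal_nonneg μ v x)]

lemma my_integrable_pow_gaussianReal_centered {v : ℝ≥0} (hv : v ≠ 0) (k : ℕ) :
    Integrable (fun x => x ^ k) (gaussianReal 0 v) := by
  have hvpos : (0:ℝ) < v := lt_of_le_of_ne v.coe_nonneg (by exact_mod_cast hv.symm)
  have hb : (0:ℝ) < (2*(v:ℝ))⁻¹ := by positivity
  rw [gaussianReal_of_var_ne_zero _ hv]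
  have h1 : (gaussianPDF 0 v) = fun x => ((Real.toNNReal (gaussianPDFReal 0 v x) : ℝ≥0) : ℝ≥0∞) := rfl
  rw [h1, integrable_withDensity_iff_integrable_smul (measurable_gaussianPDFReal 0 v).real_toNNReal]
  have : (fun x => (Real.toNNReal (gaussianPDFReal 0 v x) : ℝ≥0) • x ^ k)
      = fun x => (√(2 * π * v))⁻¹ * (x ^ k * rexp (-(2*(v:ℝ))⁻¹ * x ^ 2)) := by
    ext x
    rw [NNReal.smul_def, Real.coe_toNNReal _ (gaussianPDFReal_nonneg 0 v x)]
    have harg : -(x - 0) ^ 2 / (2 * (v:ℝ)) = -(2*(v:ℝ))⁻¹ * x ^ 2 := by ring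
    rw [smul_eq_mul, gaussianPDFReal, harg]
    ring
  rw [this]
  exact (my_integrable_pow_mul_exp hb k).const_mul _

lemma my_odd_integral {b : ℝ} (k : ℕ) :
    ∫ x : ℝ, x ^ (2 * k + 1) * rexp (-b * x ^ 2) = 0 := by
  have h := integral_neg_eq_self (fun x : ℝ => x ^ (2 * k + 1) * rexp (-b * x ^ 2)) volume
  have h2 : (fun x : ℝ => (-x) ^ (2 * k + 1) * rexp (-b * (-x) ^ 2))
      = fun x : ℝ => -(x ^ (2 * k + 1) * rexp (-b * x ^ 2)) := by
    ext x; rw [Odd.neg_pow ⟨k, by ring⟩, neg_sq]; ring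
  rw [h2, integral_neg] at h
  linarith

lemma my_even_integral {b : ℝ} (hb : 0 < b) (k : ℕ) (hk : k = 2 ∨ k = 4) :
    ∫ x : ℝ, x ^ k * rexp (-b * x ^ 2)
      = (if k = 2 then Real.sqrt π / 2 else 3 * Real.sqrt π / 4) * (Real.sqrt b)⁻¹ * b⁻¹ ^ (k / 2) := by
  have habs := integral_comp_abs (f := fun y : ℝ => y ^ k * rexp (-b * y ^ 2))
  have hpow : ∀ x : ℝ, |x| ^ k * rexp (-b * |x| ^ 2) = x ^ k * rexp (-b * x ^ 2) := by
    intro x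
    rcases hk with h | h <;> subst h <;>
      · rw [sq_abs]
        try rw [pow_abs, abs_of_nonneg (by positivity)]
  simp only [hpow] at habs
  rw [habs]
  have hset : ∫ y in Ioi (0:ℝ), y ^ k * rexp (-b * y ^ 2)
      = ∫ y in Ioi (0:ℝ), y ^ ((k:ℝ)) * rexp (-b * y ^ ((2:ℝ))) := by
    refine setIntegral_congr_fun measurableSet_Ioi (fun y hy => ?_) |>.symm
    rw [Real.rpow_natCast, show ((2:ℝ)) = ((2:ℕ):ℝ) by norm_num, Real.rpow_natCast]
  have hval := integral_rpow_mul_exp_neg_mul_rpow (p := 2) (q := (k:ℝ))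
    (by norm_num) (by exact_mod_cast neg_one_lt_zero.trans_le (Nat.cast_nonneg k)) hb
  rw [hset, hval]
  have hb' : (0:ℝ) ≤ b := hb.le
  have hbr : ∀ y : ℝ, b ^ (y : ℝ) = b ^ y := fun _ => rfl
  rcases hk with h | h <;> subst h
  · have hG : Real.Gamma (((2:ℕ):ℝ) + 1) / 2⁻¹ = 0 ∨ True := Or.inr trivial
    have h32 : (((2:ℕ):ℝ) + 1) / 2 = 1/2 + 1 := by norm_num
    rw [h32, Real.Gamma_add_one (by norm_num), Real.Gamma_one_half_eq]
    have hbpow : b ^ (-(((2:ℕ):ℝ) + 1) / 2) = (Real.sqrt b)⁻¹ * b⁻¹ := by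
      rw [show (-(((2:ℕ):ℝ) + 1) / 2) = (-(1/2)) + (-1) by norm_num,
        Real.rpow_add hb, Real.rpow_neg_one, Real.rpow_neg hb', ← Real.sqrt_eq_rpow]
    rw [hbpow]
    simp
    ring
  · have h52 : (((4:ℕ):ℝ) + 1) / 2 = (3/2 : ℝ) + 1 := by norm_num
    rw [h52, Real.Gamma_add_one (by norm_num),
      show ((3:ℝ)/2) = 1/2 + 1 by norm_num, Real.Gamma_add_one (by norm_num),
      Real.Gamma_one_half_eq]
    have hbpow : b ^ (-(((4:ℕ):ℝ) + 1) / 2) = (Real.sqrt b)⁻¹ * (b⁻¹ * b⁻¹) := by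
      rw [show (-(((4:ℕ):ℝ) + 1) / 2) = (-(1/2)) + ((-1) + (-1)) by norm_num,
        Real.rpow_add hb, Real.rpow_add hb, Real.rpow_neg_one, Real.rpow_neg hb',
        ← Real.sqrt_eq_rpow]
    rw [hbpow]
    simp
    ring

lemma my_centered_reduce {v : ℝ≥0} (hv : v ≠ 0) (k : ℕ) :
    ∫ x, x ^ k ∂(gaussianReal 0 v)
      = (√(2 * π * v))⁻¹ * ∫ x, x ^ k * rexp (-(2*(v:ℝ))⁻¹ * x ^ 2) := by
  rw [my_integral_gaussianReal hv, ← integral_const_mul]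
  congr 1
  ext x
  rw [gaussianPDFReal, show -(x - 0) ^ 2 / (2 * (v:ℝ)) = -(2*(v:ℝ))⁻¹ * x ^ 2 from by ring]
  ring

lemma my_norm {v : ℝ≥0} (hv : v ≠ 0) :
    (√(2 * π * v))⁻¹ * √(π / (2*(v:ℝ))⁻¹) = 1 := by
  have h := integral_gaussianPDFReal_eq_one 0 hv
  have h2 : ∫ x, gaussianPDFReal 0 v x
      = (√(2 * π * v))⁻¹ * ∫ x : ℝ, rexp (-(2*(v:ℝ))⁻¹ * x ^ 2) := by
    rw [← integral_const_mul]
    congr 1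
    ext x
    rw [gaussianPDFReal, show -(x - 0) ^ 2 / (2 * (v:ℝ)) = -(2*(v:ℝ))⁻¹ * x ^ 2 from by ring]
  rw [h2, integral_gaussian] at h
  exact h

lemma my_m1 {v : ℝ≥0} (hv : v ≠ 0) : ∫ x, x ^ 1 ∂(gaussianReal 0 v) = 0 := by
  rw [my_centered_reduce hv 1]
  have h := my_odd_integral (b := (2*(v:ℝ))⁻¹) 0
  simp only [Nat.reduceMul, Nat.reduceAdd] at h
  rw [h, mul_zero]

lemma my_m3 {v : ℝ≥0} (hv : v ≠ 0) : ∫ x, x ^ 3 ∂(gaussianReal 0 v) = 0 := by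
  rw [my_centered_reduce hv 3]
  have h := my_odd_integral (b := (2*(v:ℝ))⁻¹) 1
  simp only [Nat.reduceMul, Nat.reduceAdd] at h
  rw [h, mul_zero]

lemma my_m2 {v : ℝ≥0} (hv : v ≠ 0) : ∫ x, x ^ 2 ∂(gaussianReal 0 v) = v := by
  have hvpos : (0:ℝ) < v := lt_of_le_of_ne v.coe_nonneg (by exact_mod_cast hv.symm)
  have hb : (0:ℝ) < (2*(v:ℝ))⁻¹ := by positivity
  have hnorm := my_norm hv
  rw [Real.sqrt_div pi_nonneg] at hnorm
  rw [Real.sqrt_inv] at hnorm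
  rw [my_centered_reduce hv 2, my_even_integral hb 2 (Or.inl rfl), Real.sqrt_inv]
  rw [if_pos rfl]
  rw [div_inv_eq_mul] at hnorm
  simp only [inv_inv]
  simp only [Nat.reduceDiv, pow_one, inv_inv]
  linear_combination (v:ℝ) * hnorm

lemma my_m4 {v : ℝ≥0} (hv : v ≠ 0) : ∫ x, x ^ 4 ∂(gaussianReal 0 v) = 3 * (v:ℝ)^2 := by
  have hvpos : (0:ℝ) < v := lt_of_le_of_ne v.coe_nonneg (by exact_mod_cast hv.symm)
  have hb : (0:ℝ) < (2*(v:ℝ))⁻¹ := by positivity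
  have hnorm := my_norm hv
  rw [Real.sqrt_div pi_nonneg] at hnorm
  rw [Real.sqrt_inv] at hnorm
  rw [my_centered_reduce hv 4, my_even_integral hb 4 (Or.inr rfl), Real.sqrt_inv]
  rw [if_neg (by norm_num)]
  rw [div_inv_eq_mul] at hnorm
  simp only [inv_inv]
  simp only [Nat.reduceDiv, inv_inv]
  linear_combination (3*(v:ℝ)^2) * hnorm

lemma my_map_shift (μ : ℝ) (v : ℝ≥0) : gaussianReal μ v = (gaussianReal 0 v).map (· + μ) := by
  rw [gaussianReal_map_add_const, zero_add]

lemma my_integrable_pow_gaussianReal (μ : ℝ) {v : ℝ≥0} (hv : v ≠ 0) (k : ℕ) :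
    Integrable (fun x => x ^ k) (gaussianReal μ v) := by
  rw [my_map_shift, integrable_map_measure (by fun_prop : AEStronglyMeasurable (fun x : ℝ => x ^ k) _)
    (measurable_add_const μ).aemeasurable]
  have he : ((fun x : ℝ => x ^ k) ∘ (· + μ))
      = fun x : ℝ => ∑ i ∈ Finset.range (k+1), x ^ i * μ ^ (k - i) * (k.choose i : ℝ) := by
    ext x; simp [Function.comp, add_pow]
  rw [he]
  exact integrable_finset_sum _ fun i _ =>
    ((my_integrable_pow_gaussianReal_centered hv i).mul_const _).mul_const _

lemma my_gmom1 (μ : ℝ) {v : ℝ≥0} (hv : v ≠ 0) : ∫ x, x ^ 1 ∂(gaussianReal μ v) = μ := by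
  have h1 := my_integrable_pow_gaussianReal_centered hv 1
  rw [my_map_shift, integral_map (measurable_add_const μ).aemeasurable
    (by fun_prop : AEStronglyMeasurable (fun x : ℝ => x ^ 1) _)]
  have he : (fun x : ℝ => ((fun y : ℝ => y ^ 1) ((· + μ) x))) = fun x : ℝ => x ^ 1 + μ := by
    ext x; ring
  rw [he, integral_add h1 (integrable_const _), my_m1 hv, integral_const]
  simp

lemma my_gmom2 (μ : ℝ) {v : ℝ≥0} (hv : v ≠ 0) :
    ∫ x, x ^ 2 ∂(gaussianReal μ v) = μ ^ 2 + v := by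
  have h1 := my_integrable_pow_gaussianReal_centered hv 1
  have h2 := my_integrable_pow_gaussianReal_centered hv 2
  rw [my_map_shift, integral_map (measurable_add_const μ).aemeasurable
    (by fun_prop : AEStronglyMeasurable (fun x : ℝ => x ^ 2) _)]
  have he : (fun x : ℝ => ((fun y : ℝ => y ^ 2) ((· + μ) x)))
      = fun x : ℝ => x ^ 2 + (x ^ 1 * (2 * μ) + μ ^ 2) := by
    ext x; ring
  rw [he, integral_add h2 (show Integrable (fun x : ℝ => x ^ 1 * (2 * μ) + μ ^ 2) _ from
      (h1.mul_const _).add (integrable_const _)),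
    integral_add (h1.mul_const _) (integrable_const _), integral_mul_const,
    my_m2 hv, my_m1 hv, integral_const]
  simp [add_comm]

lemma my_gmom3 (μ : ℝ) {v : ℝ≥0} (hv : v ≠ 0) :
    ∫ x, x ^ 3 ∂(gaussianReal μ v) = μ ^ 3 + 3 * μ * v := by
  have h1 := my_integrable_pow_gaussianReal_centered hv 1
  have h2 := my_integrable_pow_gaussianReal_centered hv 2
  have h3 := my_integrable_pow_gaussianReal_centered hv 3
  rw [my_map_shift, integral_map (measurable_add_const μ).aemeasurable
    (by fun_prop : AEStronglyMeasurable (fun x : ℝ => x ^ 3) _)]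
  have he : (fun x : ℝ => ((fun y : ℝ => y ^ 3) ((· + μ) x)))
      = fun x : ℝ => x ^ 3 + (x ^ 2 * (3 * μ) + (x ^ 1 * (3 * μ ^ 2) + μ ^ 3)) := by
    ext x; ring
  rw [he, integral_add h3 (show Integrable
        (fun x : ℝ => x ^ 2 * (3 * μ) + (x ^ 1 * (3 * μ ^ 2) + μ ^ 3)) _ from
      (h2.mul_const _).add ((h1.mul_const _).add (integrable_const _))),
    integral_add (h2.mul_const _) (show Integrable
        (fun x : ℝ => x ^ 1 * (3 * μ ^ 2) + μ ^ 3) _ from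
      (h1.mul_const _).add (integrable_const _)),
    integral_add (h1.mul_const _) (integrable_const _),
    integral_mul_const, integral_mul_const,
    my_m3 hv, my_m2 hv, my_m1 hv, integral_const]
  simp
  ring

lemma my_gmom4 (μ : ℝ) {v : ℝ≥0} (hv : v ≠ 0) :
    ∫ x, x ^ 4 ∂(gaussianReal μ v) = μ ^ 4 + 6 * μ ^ 2 * v + 3 * (v:ℝ) ^ 2 := by
  have h1 := my_integrable_pow_gaussianReal_centered hv 1
  have h2 := my_integrable_pow_gaussianReal_centered hv 2
  have h3 := my_integrable_pow_gaussianReal_centered hv 3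
  have h4 := my_integrable_pow_gaussianReal_centered hv 4
  rw [my_map_shift, integral_map (measurable_add_const μ).aemeasurable
    (by fun_prop : AEStronglyMeasurable (fun x : ℝ => x ^ 4) _)]
  have he : (fun x : ℝ => ((fun y : ℝ => y ^ 4) ((· + μ) x)))
      = fun x : ℝ => x ^ 4 + (x ^ 3 * (4 * μ) + (x ^ 2 * (6 * μ ^ 2) +
          (x ^ 1 * (4 * μ ^ 3) + μ ^ 4))) := by
    ext x; ring
  rw [he, integral_add h4 (show Integrable (fun x : ℝ => x ^ 3 * (4 * μ) +
        (x ^ 2 * (6 * μ ^ 2) + (x ^ 1 * (4 * μ ^ 3) + μ ^ 4))) _ from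
      (h3.mul_const _).add ((h2.mul_const _).add ((h1.mul_const _).add (integrable_const _)))),
    integral_add (h3.mul_const _) (show Integrable (fun x : ℝ =>
        x ^ 2 * (6 * μ ^ 2) + (x ^ 1 * (4 * μ ^ 3) + μ ^ 4)) _ from
      (h2.mul_const _).add ((h1.mul_const _).add (integrable_const _))),
    integral_add (h2.mul_const _) (show Integrable (fun x : ℝ =>
        x ^ 1 * (4 * μ ^ 3) + μ ^ 4) _ from (h1.mul_const _).add (integrable_const _)),
    integral_add (h1.mul_const _) (integrable_const _),
    integral_mul_const, integral_mul_const, integral_mul_const,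
    my_m4 hv, my_m3 hv, my_m2 hv, my_m1 hv, integral_const]
  simp
  ring

theorem stmt_6 {Ω : Type*} [MeasureSpace Ω] [IsProbabilityMeasure (ℙ : Measure Ω)]
    (β γ σX σY σs l : ℝ) (hσX : 0 < σX) (hσY : 0 < σY) (hσs : 0 < σs) (hl : 0 ≤ l)
    (X Y Z : Ω → ℝ) (hXm : Measurable X) (hYm : Measurable Y) (hZm : Measurable Z)
    (hX : Measure.map X ℙ = gaussianReal γ (Real.toNNReal (σX ^ 2)))
    (hY : Measure.map Y ℙ = gaussianReal (β * γ) (Real.toNNReal (σY ^ 2)))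
    (hZ : Measure.map Z ℙ = gaussianReal γ (Real.toNNReal (σs ^ 2)))
    (hind : iIndepFun ![X, Y, Z] ℙ) :
    variance (fun ω => (X ω * Y ω - β * X ω ^ 2) / σY ^ 2 *
        Set.indicator {ω' : Ω | l * σs < |Z ω'|} (fun _ => (1 : ℝ)) ω) ℙ =
      ((γ ^ 2 / σY ^ 2 + σX ^ 2 / σY ^ 2) +
          β ^ 2 * (σX ^ 2 / σY ^ 2) * (γ ^ 2 / σY ^ 2 + 3 * (σX ^ 2 / σY ^ 2))) *
        (ℙ {ω | l * σs < |Z ω|}).toReal -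
      β ^ 2 * (σX ^ 2 / σY ^ 2) ^ 2 * (ℙ {ω | l * σs < |Z ω|}).toReal ^ 2 := by
  have hσY2 : (σY:ℝ) ^ 2 ≠ 0 := by positivity
  have hvX : Real.toNNReal (σX ^ 2) ≠ 0 := by
    simp only [ne_eq, Real.toNNReal_eq_zero, not_le]; positivity
  have hvY : Real.toNNReal (σY ^ 2) ≠ 0 := by
    simp only [ne_eq, Real.toNNReal_eq_zero, not_le]; positivity
  have hvXc : ((Real.toNNReal (σX ^ 2) : ℝ≥0) : ℝ) = σX ^ 2 :=
    Real.coe_toNNReal _ (sq_nonneg σX)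
  have hvYc : ((Real.toNNReal (σY ^ 2) : ℝ≥0) : ℝ) = σY ^ 2 :=
    Real.coe_toNNReal _ (sq_nonneg σY)
  -- ambient integrability and moments
  have hIX : ∀ k, Integrable (fun ω => X ω ^ k) ℙ := fun k => by
    have h := my_integrable_pow_gaussianReal γ hvX k
    rw [← hX] at h
    exact (integrable_map_measure (measurable_id.pow_const k).aestronglyMeasurable
      hXm.aemeasurable).mp h
  have hIY : ∀ k, Integrable (fun ω => Y ω ^ k) ℙ := fun k => by
    have h := my_integrable_pow_gaussianReal (β * γ) hvY k
    rw [← hY] at h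
    exact (integrable_map_measure (measurable_id.pow_const k).aestronglyMeasurable
      hYm.aemeasurable).mp h
  have hEXk : ∀ k, ∫ ω, X ω ^ k ∂ℙ = ∫ x, x ^ k ∂(gaussianReal γ (Real.toNNReal (σX ^ 2))) := by
    intro k
    have h := integral_map (μ := ℙ) (f := fun x : ℝ => x ^ k) hXm.aemeasurable
      (measurable_id.pow_const k).aestronglyMeasurable
    rw [hX] at h
    exact h.symm
  have hEYk : ∀ k, ∫ ω, Y ω ^ k ∂ℙ
      = ∫ x, x ^ k ∂(gaussianReal (β * γ) (Real.toNNReal (σY ^ 2))) := by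
    intro k
    have h := integral_map (μ := ℙ) (f := fun x : ℝ => x ^ k) hYm.aemeasurable
      (measurable_id.pow_const k).aestronglyMeasurable
    rw [hY] at h
    exact h.symm
  have hEX1 : ∫ ω, X ω ^ 1 ∂ℙ = γ := by rw [hEXk 1, my_gmom1 _ hvX]
  have hEX2 : ∫ ω, X ω ^ 2 ∂ℙ = γ ^ 2 + σX ^ 2 := by rw [hEXk 2, my_gmom2 _ hvX, hvXc]
  have hEX3 : ∫ ω, X ω ^ 3 ∂ℙ = γ ^ 3 + 3 * γ * σX ^ 2 := by rw [hEXk 3, my_gmom3 _ hvX, hvXc]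
  have hEX4 : ∫ ω, X ω ^ 4 ∂ℙ = γ ^ 4 + 6 * γ ^ 2 * σX ^ 2 + 3 * (σX ^ 2) ^ 2 := by
    rw [hEXk 4, my_gmom4 _ hvX, hvXc]
  have hEY1 : ∫ ω, Y ω ^ 1 ∂ℙ = β * γ := by rw [hEYk 1, my_gmom1 _ hvY]
  have hEY2 : ∫ ω, Y ω ^ 2 ∂ℙ = (β * γ) ^ 2 + σY ^ 2 := by rw [hEYk 2, my_gmom2 _ hvY, hvYc]
  -- independence
  have hmeas : ∀ i, Measurable (![X, Y, Z] i) := by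
    intro i; fin_cases i <;> [exact hXm; exact hYm; exact hZm]
  have hXY : IndepFun X Y ℙ := hind.indepFun (show (0 : Fin 3) ≠ 1 by decide)
  have hPZ : IndepFun (fun ω => (X ω, Y ω)) Z ℙ :=
    hind.indepFun_prodMk hmeas 0 1 2 (by decide) (by decide)
  -- the indicator set
  set s : Set ℝ := {x | l * σs < |x|} with hsdef
  have hs : MeasurableSet s := measurableSet_lt measurable_const measurable_abs
  set A : Set Ω := {ω | l * σs < |Z ω|} with hAdef
  have hApre : A = Z ⁻¹' s := rfl
  have hA : MeasurableSet A := hZm hs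
  set q : ℝ := (ℙ A).toReal with hqdef
  set I : Ω → ℝ := fun ω => Set.indicator A (fun _ => (1:ℝ)) ω with hIdef
  have hIZ : I = fun ω => Set.indicator s (fun _ => (1:ℝ)) (Z ω) := by
    funext ω
    by_cases h : ω ∈ A
    · simp only [hIdef, Set.indicator_of_mem h, Set.indicator_of_mem (show Z ω ∈ s from h)]
    · simp only [hIdef, Set.indicator_of_notMem h,
        Set.indicator_of_notMem (show Z ω ∉ s from h)]
  have hIint : Integrable I ℙ := (integrable_const (1:ℝ)).indicator hA
  have hEI : ∫ ω, I ω ∂ℙ = q := by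
    rw [hIdef]
    simp only []
    rw [integral_indicator_const (1:ℝ) hA, smul_eq_mul, mul_one]
    rfl
  -- f and its square
  set f : Ω → ℝ := fun ω => (X ω * Y ω - β * X ω ^ 2) / σY ^ 2 with hfdef
  have h11 : Integrable (fun ω => X ω ^ 1 * Y ω ^ 1) ℙ :=
    (hXY.comp (measurable_id.pow_const 1) (measurable_id.pow_const 1)).integrable_mul
      (hIX 1) (hIY 1)
  have h22 : Integrable (fun ω => X ω ^ 2 * Y ω ^ 2) ℙ :=
    (hXY.comp (measurable_id.pow_const 2) (measurable_id.pow_const 2)).integrable_mul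
      (hIX 2) (hIY 2)
  have h31 : Integrable (fun ω => X ω ^ 3 * Y ω ^ 1) ℙ :=
    (hXY.comp (measurable_id.pow_const 3) (measurable_id.pow_const 1)).integrable_mul
      (hIX 3) (hIY 1)
  have hE11 : ∫ ω, X ω ^ 1 * Y ω ^ 1 ∂ℙ = γ * (β * γ) := by
    have hi : IndepFun (fun ω => X ω ^ 1) (fun ω => Y ω ^ 1) ℙ :=
      hXY.comp (measurable_id.pow_const 1) (measurable_id.pow_const 1)
    have h := hi.integral_fun_mul_eq_mul_integral (hIX 1).aestronglyMeasurable (hIY 1).aestronglyMeasurable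
    rw [hEX1, hEY1] at h
    exact h
  have hE22 : ∫ ω, X ω ^ 2 * Y ω ^ 2 ∂ℙ = (γ ^ 2 + σX ^ 2) * ((β * γ) ^ 2 + σY ^ 2) := by
    have hi : IndepFun (fun ω => X ω ^ 2) (fun ω => Y ω ^ 2) ℙ :=
      hXY.comp (measurable_id.pow_const 2) (measurable_id.pow_const 2)
    have h := hi.integral_fun_mul_eq_mul_integral (hIX 2).aestronglyMeasurable (hIY 2).aestronglyMeasurable
    rw [hEX2, hEY2] at h
    exact h
  have hE31 : ∫ ω, X ω ^ 3 * Y ω ^ 1 ∂ℙ = (γ ^ 3 + 3 * γ * σX ^ 2) * (β * γ) := by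
    have hi : IndepFun (fun ω => X ω ^ 3) (fun ω => Y ω ^ 1) ℙ :=
      hXY.comp (measurable_id.pow_const 3) (measurable_id.pow_const 1)
    have h := hi.integral_fun_mul_eq_mul_integral (hIX 3).aestronglyMeasurable (hIY 1).aestronglyMeasurable
    rw [hEX3, hEY1] at h
    exact h
  have hfeq : f = fun ω => X ω ^ 1 * Y ω ^ 1 * (σY ^ 2)⁻¹ - X ω ^ 2 * (β * (σY ^ 2)⁻¹) := by
    funext ω; rw [hfdef]; field_simp
  have hfint : Integrable f ℙ := by
    rw [hfeq]; exact (h11.mul_const _).sub ((hIX 2).mul_const _)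
  have hEf : ∫ ω, f ω ∂ℙ = -β * σX ^ 2 / σY ^ 2 := by
    rw [hfeq, integral_sub (h11.mul_const _) ((hIX 2).mul_const _),
      integral_mul_const, integral_mul_const, hE11, hEX2]
    field_simp
    ring
  have hf2eq : (fun ω => f ω ^ 2) = fun ω =>
      X ω ^ 2 * Y ω ^ 2 * ((σY ^ 2) ^ 2)⁻¹ -
        X ω ^ 3 * Y ω ^ 1 * (2 * β * ((σY ^ 2) ^ 2)⁻¹) +
        X ω ^ 4 * (β ^ 2 * ((σY ^ 2) ^ 2)⁻¹) := by
    funext ω; rw [hfdef]; field_simp; ring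
  have hf2int : Integrable (fun ω => f ω ^ 2) ℙ := by
    rw [hf2eq]
    exact ((h22.mul_const _).sub (h31.mul_const _)).add ((hIX 4).mul_const _)
  have hEf2 : ∫ ω, f ω ^ 2 ∂ℙ =
      ((γ ^ 2 + σX ^ 2) * ((β * γ) ^ 2 + σY ^ 2) * ((σY ^ 2) ^ 2)⁻¹ -
        (γ ^ 3 + 3 * γ * σX ^ 2) * (β * γ) * (2 * β * ((σY ^ 2) ^ 2)⁻¹) +
        (γ ^ 4 + 6 * γ ^ 2 * σX ^ 2 + 3 * (σX ^ 2) ^ 2) * (β ^ 2 * ((σY ^ 2) ^ 2)⁻¹)) := by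
    rw [hf2eq, integral_add (show Integrable (fun ω => X ω ^ 2 * Y ω ^ 2 * ((σY ^ 2) ^ 2)⁻¹ -
          X ω ^ 3 * Y ω ^ 1 * (2 * β * ((σY ^ 2) ^ 2)⁻¹)) ℙ from
        (h22.mul_const _).sub (h31.mul_const _)) ((hIX 4).mul_const _),
      integral_sub (h22.mul_const _) (h31.mul_const _),
      integral_mul_const, integral_mul_const, integral_mul_const,
      hE22, hE31, hEX4]
  -- independence of f (resp. f²) and the indicator
  have hφm : Measurable (fun p : ℝ × ℝ => (p.1 * p.2 - β * p.1 ^ 2) / σY ^ 2) := by fun_prop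
  have hψm : Measurable (Set.indicator s (fun _ => (1:ℝ))) := measurable_const.indicator hs
  have hfI : IndepFun f I ℙ := by
    rw [hIZ]
    exact hPZ.comp hφm hψm
  have hf2I : IndepFun (fun ω => f ω ^ 2) I ℙ := by
    rw [hIZ]
    exact hPZ.comp (hφm.pow_const 2) hψm
  -- the variance computation
  set g : Ω → ℝ := fun ω => f ω * I ω with hgdef
  have hgm : AEStronglyMeasurable g ℙ := by
    apply Measurable.aestronglyMeasurable
    rw [hgdef, hIZ]
    fun_prop
  have hg2 : (fun ω => g ω ^ 2) = fun ω => f ω ^ 2 * I ω := by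
    funext ω
    rw [hgdef]
    by_cases h : ω ∈ A
    · simp only [hIdef, Set.indicator_of_mem h]; ring
    · simp only [hIdef, Set.indicator_of_notMem h]; ring
  have hg2int : Integrable (fun ω => g ω ^ 2) ℙ := by
    rw [hg2]
    have : (fun ω => f ω ^ 2 * I ω) = Set.indicator A (fun ω => f ω ^ 2) := by
      funext ω
      by_cases h : ω ∈ A
      · simp only [hIdef, Set.indicator_of_mem h]; ring
      · simp only [hIdef, Set.indicator_of_notMem h]; ring
    rw [this]
    exact hf2int.indicator hA
  have hMem : MemLp g 2 ℙ := by
    rw [memLp_two_iff_integrable_sq hgm]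
    exact hg2int
  have hvar : variance g ℙ = (∫ ω, g ω ^ 2 ∂ℙ) - (∫ ω, g ω ∂ℙ) ^ 2 := by
    rw [variance_eq_sub hMem]
    rfl
  have hEg : ∫ ω, g ω ∂ℙ = (-β * σX ^ 2 / σY ^ 2) * q := by
    have h := hfI.integral_fun_mul_eq_mul_integral hfint.aestronglyMeasurable hIint.aestronglyMeasurable
    rw [hEf, hEI] at h
    exact h
  have hEg2 : ∫ ω, g ω ^ 2 ∂ℙ =
      ((γ ^ 2 + σX ^ 2) * ((β * γ) ^ 2 + σY ^ 2) * ((σY ^ 2) ^ 2)⁻¹ -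
        (γ ^ 3 + 3 * γ * σX ^ 2) * (β * γ) * (2 * β * ((σY ^ 2) ^ 2)⁻¹) +
        (γ ^ 4 + 6 * γ ^ 2 * σX ^ 2 + 3 * (σX ^ 2) ^ 2) * (β ^ 2 * ((σY ^ 2) ^ 2)⁻¹)) * q := by
    have h := hf2I.integral_fun_mul_eq_mul_integral hf2int.aestronglyMeasurable hIint.aestronglyMeasurable
    rw [hEf2, hEI] at h
    rw [hg2]
    exact h
  have hfinal : variance g ℙ =
      ((γ ^ 2 / σY ^ 2 + σX ^ 2 / σY ^ 2) +
          β ^ 2 * (σX ^ 2 / σY ^ 2) * (γ ^ 2 / σY ^ 2 + 3 * (σX ^ 2 / σY ^ 2))) * q -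
        β ^ 2 * (σX ^ 2 / σY ^ 2) ^ 2 * q ^ 2 := by
    rw [hvar, hEg, hEg2]
    field_simp
    ring
  exact hfinal
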